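/- (Boolean algebraic CLT, one-variable case.) Let (A, φ) be a quantum probability space and a : ℕ → A a sequence of self-adjoint elements which are identically distributed (φ(a_n^m) = φ(a_1^m) for all n, m) and boolean independent in the following sense: for every n ≥ 1, every σ : {1,…,n} → ℕ with σ(k) ≠ σ(k+1) for 1 ≤ k < n, and every choice of elements c_1, …, c_n where c_i belongs to the non-unital subalgebra of A generated by a_{σ(i)}, one has φ(c_1 ⋯ c_n) = φ(c_1) ⋯ φ(c_n). Assume φ(a_1) = 0 and φ(a_1^2) = 1. Then for s_N := (a_1 + ⋯ + a_N)/√N and every m ∈ ℕ: φ(s_N^m) → 0 as N → ∞ if m is odd, and φ(s_N^m) → 1 as N → ∞ if m is even; these are the moments of the symmetric Bernoulli measure (δ_{−1} + δ_{1})/2. -/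

import Mathlib

open Filter Finset
open scoped ComplexOrder

namespace BCLT

/-- run-length encoding -/
def rle : List ℕ → List (ℕ × ℕ)
  | [] => []
  | x :: xs =>
    match rle xs with
    | [] => [(x, 1)]
    | (y, c) :: rest => if x = y then (x, c+1) :: rest else (x,1) :: (y,c) :: rest

lemma rle_cons (x : ℕ) (xs : List ℕ) :
    rle (x :: xs) = match rle xs with
      | [] => [(x, 1)]
      | (y, c) :: rest => if x = y then (x, c+1) :: rest else (x,1) :: (y,c) :: rest := rfl

lemma rle_nil_iff (l : List ℕ) : rle l = [] ↔ l = [] := by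
  cases l with
  | nil => simp [rle]
  | cons x xs =>
    simp only [rle]
    constructor
    · rcases h : rle xs with _ | ⟨⟨y, c⟩, rest⟩ <;> simp [h] <;> split <;> simp
    · simp

lemma rle_cons_head (x : ℕ) (xs : List ℕ) :
    ∃ c rest, rle (x :: xs) = (x, c) :: rest := by
  simp only [rle]
  rcases h : rle xs with _ | ⟨⟨y, c⟩, rest⟩
  · exact ⟨1, [], rfl⟩
  · by_cases hxy : x = y
    · exact ⟨c+1, rest, by simp [hxy]⟩
    · exact ⟨1, (y,c) :: rest, by simp [hxy]⟩

lemma rle_counts_pos : ∀ l : List ℕ, ∀ p ∈ rle l, 1 ≤ p.2 := by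
  intro l
  induction l with
  | nil => simp [rle]
  | cons x xs ih =>
    intro p hp
    simp only [rle] at hp
    rcases h : rle xs with _ | ⟨⟨y, c⟩, rest⟩ <;> rw [h] at hp
    · simp at hp; subst hp; simp
    · by_cases hxy : x = y
      · simp [hxy] at hp
        rcases hp with hp | hp
        · subst hp; simp
        · exact ih p (by rw [h]; exact List.mem_cons_of_mem _ hp)
      · simp [hxy] at hp
        rcases hp with hp | hp | hp
        · subst hp; simp
        · subst hp; exact ih (y, c) (by rw [h]; exact List.mem_cons_self)
        · exact ih p (by rw [h]; exact List.mem_cons_of_mem _ hp)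

lemma rle_vals_mem : ∀ l : List ℕ, ∀ p ∈ rle l, p.1 ∈ l := by
  intro l
  induction l with
  | nil => simp [rle]
  | cons x xs ih =>
    intro p hp
    simp only [rle] at hp
    rcases h : rle xs with _ | ⟨⟨y, c⟩, rest⟩ <;> rw [h] at hp
    · simp at hp; subst hp; simp
    · by_cases hxy : x = y
      · simp [hxy] at hp
        rcases hp with hp | hp
        · subst hp; simp [hxy]
        · exact List.mem_cons_of_mem _ (ih p (by rw [h]; exact List.mem_cons_of_mem _ hp))
      · simp [hxy] at hp
        rcases hp with hp | hp | hp
        · subst hp; simp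
        · subst hp
          exact List.mem_cons_of_mem _ (ih (y,c) (by rw [h]; exact List.mem_cons_self))
        · exact List.mem_cons_of_mem _ (ih p (by rw [h]; exact List.mem_cons_of_mem _ hp))

lemma rle_chain : ∀ l : List ℕ, List.Chain' (fun p q : ℕ × ℕ => p.1 ≠ q.1) (rle l) := by
  intro l
  induction l with
  | nil => simp [rle, List.Chain']
  | cons x xs ih =>
    simp only [rle]
    rcases h : rle xs with _ | ⟨⟨y, c⟩, rest⟩ <;> rw [h] at ih
    · simp [List.Chain']
    · by_cases hxy : x = y
      · subst hxy
        dsimp only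
        rw [if_pos rfl]
        cases rest with
        | nil => simp [List.Chain']
        | cons q t =>
          simp only [List.Chain'] at ih ⊢
          rw [List.isChain_cons_cons] at ih ⊢
          exact ⟨ih.1, ih.2⟩
      · simp only [if_neg hxy]
        simp only [List.Chain']
        rw [List.isChain_cons_cons]
        exact ⟨hxy, ih⟩

lemma rle_decode {M : Type*} [Monoid M] (f : ℕ → M) :
    ∀ l : List ℕ, (l.map f).prod = ((rle l).map (fun p => f p.1 ^ p.2)).prod := by
  intro l
  induction l with
  | nil => simp [rle]
  | cons x xs ih =>
    simp only [rle]
    rcases h : rle xs with _ | ⟨⟨y, c⟩, rest⟩ <;> rw [h] at ih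
    · rw [(rle_nil_iff xs).mp h] at ih ⊢
      simp
    · by_cases hxy : x = y
      · subst hxy
        dsimp only
        rw [if_pos rfl]
        simp only [List.map_cons, List.prod_cons] at ih ⊢
        rw [ih, ← mul_assoc, pow_succ']
      · simp only [if_neg hxy, List.map_cons, List.prod_cons] at ih ⊢
        rw [ih, pow_one]

lemma rle_replicate_cons (v x : ℕ) (hxv : x ≠ v) (L : List ℕ) :
    ∀ k : ℕ, 1 ≤ k → rle (List.replicate k v ++ x :: L) = (v, k) :: rle (x :: L) := by
  intro k
  induction k with
  | zero => omega
  | succ k ih =>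
    intro _
    by_cases hk : 1 ≤ k
    · have : List.replicate (k+1) v ++ x :: L = v :: (List.replicate k v ++ x :: L) := by
        simp [List.replicate_succ]
      rw [this, rle_cons, ih hk]
      simp
    · have hk0 : k = 0 := by omega
      subst hk0
      have e : List.replicate (0+1) v ++ x :: L = v :: x :: L := by
        simp [List.replicate_succ]
      rw [e, rle_cons]
      obtain ⟨c, rest, hr⟩ := rle_cons_head x L
      rw [hr]
      simp [Ne.symm hxv]

end BCLT

open Filter

namespace BCLT

/-- scalar moment recursion -/
def Drec (μ : ℕ → ℂ) : ℕ → ℕ → ℕ → ℂ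
  | 0, k, _ => μ k
  | m+1, k, N => Drec μ m (k+1) N + ((N : ℂ) - 1) * μ k * Drec μ m 1 N

lemma tendsto_inv_nat : Tendsto (fun N : ℕ => ((N : ℂ))⁻¹) atTop (nhds 0) := by
  have h := tendsto_inv_atTop_nhds_zero_nat (𝕜 := ℝ)
  have h2 := (Complex.continuous_ofReal.tendsto (0 : ℝ)).comp h
  have : (0:ℂ) = ((0:ℝ):ℂ) := by norm_num
  rw [this]
  exact h2.congr (by intro n; simp [Function.comp])

lemma tendsto_ratio : Tendsto (fun N : ℕ => ((N : ℂ) - 1) / (N : ℂ)) atTop (nhds 1) := by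
  have h : Tendsto (fun N : ℕ => 1 - ((N : ℂ))⁻¹) atTop (nhds (1 - 0)) :=
    tendsto_const_nhds.sub tendsto_inv_nat
  rw [sub_zero] at h
  apply h.congr'
  filter_upwards [eventually_ge_atTop 1] with N hN
  have hN0 : (N : ℂ) ≠ 0 := Nat.cast_ne_zero.mpr (by omega)
  field_simp

lemma Dasymp (μ : ℕ → ℂ) (h1 : μ 1 = 0) (h2 : μ 2 = 1) : ∀ m : ℕ,
    (Even m →
      (∀ k, Tendsto (fun N : ℕ => Drec μ m k N / (N : ℂ) ^ (m / 2)) atTop (nhds (μ k))) ∧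
      ∃ γ, Tendsto (fun N : ℕ => Drec μ m 1 N / (N : ℂ) ^ (m / 2) * N) atTop (nhds γ)) ∧
    (Odd m → ∀ k, ∃ c,
      Tendsto (fun N : ℕ => Drec μ m k N / (N : ℂ) ^ (m / 2)) atTop (nhds c) ∧
      (k = 1 → c = 1)) := by
  intro m
  induction m with
  | zero =>
    refine ⟨fun _ => ⟨fun k => ?_, ⟨0, ?_⟩⟩, fun h => absurd h (by simp)⟩
    · simpa [Drec] using tendsto_const_nhds (α := ℕ) (f := atTop) (a := μ k)
    · simp [Drec, h1]
  | succ m ih =>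
    rcases Nat.even_or_odd m with hm | hm
    · -- m even, m+1 odd
      obtain ⟨hall, γ, hγ⟩ := ih.1 hm
      have hm' : m % 2 = 0 := Nat.even_iff.mp hm
      have hdiv : (m + 1) / 2 = m / 2 := by omega
      constructor
      · intro h; have := Nat.even_iff.mp h; omega
      · intro _ k
        refine ⟨μ (k+1) + μ k * γ, ?_, ?_⟩
        · have key : Tendsto (fun N : ℕ =>
              Drec μ m (k+1) N / (N : ℂ) ^ (m / 2) +
              μ k * (((N : ℂ) - 1) / N * (Drec μ m 1 N / (N : ℂ) ^ (m / 2) * N)))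
              atTop (nhds (μ (k+1) + μ k * (1 * γ))) := by
            exact (hall (k+1)).add ((tendsto_const_nhds).mul (tendsto_ratio.mul hγ))
          rw [one_mul] at key
          rw [hdiv]
          apply key.congr'
          filter_upwards [eventually_ge_atTop 1] with N hN
          have hN0 : (N : ℂ) ≠ 0 := Nat.cast_ne_zero.mpr (by omega)
          show Drec μ m (k+1) N / _ + _ = Drec μ (m+1) k N / _
          rw [Drec]
          field_simp
        · intro hk; rw [hk, h2, h1]; ring
    · -- m odd, m+1 even
      have hodd := ih.2 hm
      have hm' : m % 2 = 1 := Nat.odd_iff.mp hm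
      have hdiv : (m + 1) / 2 = m / 2 + 1 := by omega
      constructor
      · intro _
        constructor
        · intro k
          obtain ⟨c, hc, _⟩ := hodd (k+1)
          obtain ⟨c1, hc1, hc1e⟩ := hodd 1
          have hc1' : c1 = 1 := hc1e rfl
          have key : Tendsto (fun N : ℕ =>
              (Drec μ m (k+1) N / (N : ℂ) ^ (m / 2)) * (N : ℂ)⁻¹ +
              μ k * (((N : ℂ) - 1) / N * (Drec μ m 1 N / (N : ℂ) ^ (m / 2))))
              atTop (nhds (c * 0 + μ k * (1 * c1))) :=
            (hc.mul tendsto_inv_nat).add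
              (tendsto_const_nhds.mul (tendsto_ratio.mul hc1))
          simp only [hc1', mul_zero, zero_add, one_mul, mul_one] at key
          rw [hdiv]
          apply key.congr'
          filter_upwards [eventually_ge_atTop 1] with N hN
          have hN0 : (N : ℂ) ≠ 0 := Nat.cast_ne_zero.mpr (by omega)
          show _ = Drec μ (m+1) k N / _
          rw [Drec, pow_succ]
          field_simp
        · obtain ⟨c2, hc2, _⟩ := hodd 2
          refine ⟨c2, ?_⟩
          rw [hdiv]
          apply hc2.congr'
          filter_upwards [eventually_ge_atTop 1] with N hN
          have hN0 : (N : ℂ) ≠ 0 := Nat.cast_ne_zero.mpr (by omega)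
          show Drec μ m 2 N / _ = Drec μ (m+1) 1 N / _ * N
          rw [Drec, h1, pow_succ]
          field_simp
          ring
      · intro h
        have := Nat.odd_iff.mp h; omega

end BCLT

/-- **Boolean algebraic central limit theorem, one-variable case.** -/
theorem algebraic_CLT_boolean
    {A : Type*} [Ring A] [StarRing A] [Algebra ℂ A] [StarModule ℂ A]
    (φ : A →ₗ[ℂ] ℂ)
    (hφ1 : φ 1 = 1)
    (hφpos : ∀ x : A, 0 ≤ φ (star x * x))
    (a : ℕ → A)
    (hsa : ∀ n : ℕ, 1 ≤ n → star (a n) = a n)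
    (hid : ∀ n : ℕ, 1 ≤ n → ∀ m : ℕ, φ (a n ^ m) = φ (a 1 ^ m))
    -- boolean independence
    (hbool : ∀ (n : ℕ), 1 ≤ n → ∀ σ : Fin n → ℕ, (∀ i, 1 ≤ σ i) →
      (∀ (i : Fin n) (h : (i : ℕ) + 1 < n), σ i ≠ σ ⟨(i : ℕ) + 1, h⟩) →
      ∀ c : Fin n → A,
        (∀ i, c i ∈ NonUnitalAlgebra.adjoin ℂ ({a (σ i)} : Set A)) →
        φ ((List.ofFn c).prod) = ∏ i, φ (c i))
    (hmean : φ (a 1) = 0)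
    (hvar : φ (a 1 ^ 2) = 1) :
    ∀ m : ℕ,
      (Odd m →
        Tendsto
          (fun N : ℕ =>
            φ ((((Real.sqrt N : ℂ))⁻¹ • ∑ i ∈ Finset.Icc 1 N, a i) ^ m))
          atTop (nhds 0)) ∧
      (Even m →
        Tendsto
          (fun N : ℕ =>
            φ ((((Real.sqrt N : ℂ))⁻¹ • ∑ i ∈ Finset.Icc 1 N, a i) ^ m))
          atTop (nhds 1)) := by
  classical
  set μ : ℕ → ℂ := fun k => φ (a 1 ^ k) with hμ
  -- powers stay in the adjoined subalgebra
  have hpowmem : ∀ (v ℓ : ℕ), 1 ≤ ℓ →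
      a v ^ ℓ ∈ NonUnitalAlgebra.adjoin ℂ ({a v} : Set A) := by
    intro v ℓ hℓ
    induction ℓ with
    | zero => omega
    | succ ℓ ih =>
      by_cases hℓ1 : 1 ≤ ℓ
      · rw [pow_succ]
        exact mul_mem (ih hℓ1) (NonUnitalAlgebra.self_mem_adjoin_singleton ℂ (a v))
      · have : ℓ = 0 := by omega
        subst this
        rw [pow_one]
        exact NonUnitalAlgebra.self_mem_adjoin_singleton ℂ (a v)
  -- the value of φ on a word is the product over runs
  have hword : ∀ w : List ℕ, w ≠ [] → (∀ x ∈ w, 1 ≤ x) →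
      φ ((w.map a).prod) = ((BCLT.rle w).map (fun p => μ p.2)).prod := by
    intro w hw hw1
    set R := BCLT.rle w with hR
    have hRne : R ≠ [] := fun h => hw ((BCLT.rle_nil_iff w).mp h)
    have hn : 1 ≤ R.length := List.length_pos_iff.mpr hRne
    set σ : Fin R.length → ℕ := fun i => (R.get i).1 with hσ
    set c : Fin R.length → A := fun i => a (σ i) ^ (R.get i).2 with hc
    have hσ1 : ∀ i, 1 ≤ σ i := by
      intro i
      exact hw1 _ (BCLT.rle_vals_mem w (R.get i) (R.get_mem _))
    have hne : ∀ (i : Fin R.length) (h : (i : ℕ) + 1 < R.length),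
        σ i ≠ σ ⟨(i : ℕ) + 1, h⟩ := by
      intro i h
      have hlen : (BCLT.rle w).length = R.length := by rw [hR]
      have := List.isChain_iff_getElem.mp (BCLT.rle_chain w) (i : ℕ) (by omega)
      simpa [hσ] using this
    have hmem : ∀ i, c i ∈ NonUnitalAlgebra.adjoin ℂ ({a (σ i)} : Set A) := by
      intro i
      exact hpowmem _ _ (BCLT.rle_counts_pos w (R.get i) (R.get_mem _))
    have hprod : (List.ofFn c).prod = (w.map a).prod := by
      have h1 : List.ofFn c = R.map (fun p => a p.1 ^ p.2) := by
        simp only [hc, hσ, List.get_eq_getElem]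
        exact List.ofFn_getElem_eq_map R (fun p => a p.1 ^ p.2)
      rw [h1, ← BCLT.rle_decode a w]
    have hfin := hbool R.length hn σ hσ1 hne c hmem
    rw [hprod] at hfin
    rw [hfin]
    have h2 : ∀ i, φ (c i) = μ ((R.get i).2) := by
      intro i
      exact hid (σ i) (hσ1 i) ((R.get i).2)
    calc (∏ i, φ (c i)) = ∏ i : Fin R.length, μ ((R.get i).2) := by
          exact Finset.prod_congr rfl (fun i _ => h2 i)
      _ = (List.ofFn (fun i : Fin R.length => μ ((R.get i).2))).prod := by
          rw [List.prod_ofFn]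
      _ = (R.map (fun p => μ p.2)).prod := by
          congr 1
          simp only [List.get_eq_getElem]
          exact List.ofFn_getElem_eq_map R (fun p => μ p.2)
  -- expansion of powers of the sum into words
  have hexp : ∀ (N m : ℕ),
      (∑ i ∈ Finset.Icc 1 N, a i) ^ m =
        ∑ w ∈ Fintype.piFinset (fun _ : Fin m => Finset.Icc 1 N),
          ((List.ofFn w).map a).prod := by
    intro N m
    induction m with
    | zero =>
      rw [pow_zero]
      have : ∀ w : Fin 0 → ℕ, ((List.ofFn w).map a).prod = 1 := by
        intro w; simp
      rw [Finset.sum_congr rfl (fun w _ => this w), Finset.sum_const]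
      simp
    | succ m ih =>
      rw [pow_succ', ih, Finset.sum_mul_sum, ← Finset.sum_product']
      · apply Finset.sum_nbij' (i := fun p : ℕ × (Fin m → ℕ) => Fin.cons p.1 p.2)
          (j := fun w : Fin (m+1) → ℕ => (w 0, Fin.tail w))
        · intro p hp
          rw [Finset.mem_product] at hp
          rw [Fintype.mem_piFinset]
          intro i
          induction i using Fin.cases with
          | zero => simpa using hp.1
          | succ j =>
            have := Fintype.mem_piFinset.mp hp.2 j
            simpa using this
        · intro w hw
          rw [Fintype.mem_piFinset] at hw
          rw [Finset.mem_product]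
          exact ⟨hw 0, Fintype.mem_piFinset.mpr (fun j => hw j.succ)⟩
        · intro p hp
          simp [Fin.tail_cons]
        · intro w hw
          exact Fin.cons_self_tail w
        · intro p hp
          rw [List.ofFn_succ]
          simp [Fin.cons_succ]
  -- the main moment recursion
  have hM : ∀ (m N v : ℕ), v ∈ Finset.Icc 1 N → ∀ k, 1 ≤ k →
      φ (a v ^ k * (∑ i ∈ Finset.Icc 1 N, a i) ^ m) = BCLT.Drec μ m k N := by
    intro m
    induction m with
    | zero =>
      intro N v hv k hk
      rw [pow_zero, mul_one, BCLT.Drec]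
      exact hid v (Finset.mem_Icc.mp hv).1 k
    | succ m ih =>
      intro N v hv k hk
      have hv1 : 1 ≤ v := (Finset.mem_Icc.mp hv).1
      have hN1 : 1 ≤ N := le_trans hv1 (Finset.mem_Icc.mp hv).2
      -- the one-step peel identity
      have hpeel : ∀ x ∈ Finset.Icc 1 N, x ≠ v →
          φ (a v ^ k * (a x * (∑ i ∈ Finset.Icc 1 N, a i) ^ m)) =
          μ k * φ (a x * (∑ i ∈ Finset.Icc 1 N, a i) ^ m) := by
        intro x hx hxv
        have hx1 : 1 ≤ x := (Finset.mem_Icc.mp hx).1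
        rw [hexp N m, Finset.mul_sum, Finset.mul_sum, map_sum, map_sum, Finset.mul_sum]
        apply Finset.sum_congr rfl
        intro w hw
        have hwmem : ∀ i, w i ∈ Finset.Icc 1 N := Fintype.mem_piFinset.mp hw
        have hword1 : ∀ y ∈ (x :: List.ofFn w), 1 ≤ y := by
          intro y hy
          rcases List.mem_cons.mp hy with h | h
          · subst h; exact hx1
          · obtain ⟨i, rfl⟩ := List.mem_ofFn.mp h
            exact (Finset.mem_Icc.mp (hwmem i)).1
        have e1 : a v ^ k * (a x * ((List.ofFn w).map a).prod) =
            ((List.replicate k v ++ x :: List.ofFn w).map a).prod := by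
          rw [List.map_append, List.prod_append, List.map_replicate,
            List.prod_replicate, List.map_cons, List.prod_cons]
        have e2 : a x * ((List.ofFn w).map a).prod =
            ((x :: List.ofFn w).map a).prod := by
          rw [List.map_cons, List.prod_cons]
        rw [e1, e2, hword _ (by simp) ?_, hword _ (by simp) hword1]
        · rw [BCLT.rle_replicate_cons v x hxv _ k hk, List.map_cons, List.prod_cons]
        · intro y hy
          rcases List.mem_append.mp hy with h | h
          · rw [List.eq_of_mem_replicate h]; exact hv1
          · exact hword1 y h
      -- expand the power of the sum once
      have expand : φ (a v ^ k * (∑ i ∈ Finset.Icc 1 N, a i) ^ (m+1)) =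
          ∑ x ∈ Finset.Icc 1 N, φ (a v ^ k * (a x * (∑ i ∈ Finset.Icc 1 N, a i) ^ m)) := by
        rw [pow_succ', Finset.sum_mul, Finset.mul_sum, map_sum]
      rw [expand, ← Finset.add_sum_erase _ _ hv]
      have hterm1 : φ (a v ^ k * (a v * (∑ i ∈ Finset.Icc 1 N, a i) ^ m)) =
          BCLT.Drec μ m (k+1) N := by
        rw [← mul_assoc, ← pow_succ]
        exact ih N v hv (k+1) (by omega)
      have hterm2 : ∀ x ∈ (Finset.Icc 1 N).erase v,
          φ (a v ^ k * (a x * (∑ i ∈ Finset.Icc 1 N, a i) ^ m)) =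
          μ k * BCLT.Drec μ m 1 N := by
        intro x hx
        obtain ⟨hxv, hxI⟩ := Finset.mem_erase.mp hx
        rw [hpeel x hxI hxv]
        congr 1
        have := ih N x hxI 1 le_rfl
        rw [pow_one] at this
        exact this
      rw [hterm1, Finset.sum_congr rfl hterm2, Finset.sum_const,
        Finset.card_erase_of_mem hv, Nat.card_Icc]
      rw [BCLT.Drec]
      have : ((N + 1 - 1 - 1 : ℕ) : ℂ) = (N : ℂ) - 1 := by
        push_cast [Nat.cast_sub hN1]
        ring
      rw [nsmul_eq_mul, this]
      ring
  have hS : ∀ (m N : ℕ),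
      φ ((∑ i ∈ Finset.Icc 1 N, a i) ^ (m + 1)) = (N : ℂ) * BCLT.Drec μ m 1 N := by
    intro m N
    rw [pow_succ', Finset.sum_mul, map_sum]
    have : ∀ x ∈ Finset.Icc 1 N, φ (a x * (∑ i ∈ Finset.Icc 1 N, a i) ^ m) =
        BCLT.Drec μ m 1 N := by
      intro x hx
      have := hM m N x hx 1 le_rfl
      rwa [pow_one] at this
    rw [Finset.sum_congr rfl this, Finset.sum_const, Nat.card_Icc, nsmul_eq_mul]
    norm_num
  -- final assembly
  have hsmul : ∀ (N : ℕ) (m : ℕ),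
      φ ((((Real.sqrt N : ℂ))⁻¹ • ∑ i ∈ Finset.Icc 1 N, a i) ^ m) =
      ((Real.sqrt N : ℂ))⁻¹ ^ m * φ ((∑ i ∈ Finset.Icc 1 N, a i) ^ m) := by
    intro N m
    rw [smul_pow, map_smul, smul_eq_mul]
  have hsqrt0 : Tendsto (fun N : ℕ => ((Real.sqrt N : ℂ))⁻¹) atTop (nhds 0) := by
    have hr : Tendsto (fun N : ℕ => (Real.sqrt N)⁻¹) atTop (nhds 0) := by
      have h1 : Tendsto (fun N : ℕ => ((N : ℝ))⁻¹) atTop (nhds 0) :=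
        tendsto_inv_atTop_nhds_zero_nat
      have h2 := h1.sqrt
      rw [Real.sqrt_zero] at h2
      apply h2.congr
      intro N
      rw [Real.sqrt_inv]
    have h3 := (Complex.continuous_ofReal.tendsto (0 : ℝ)).comp hr
    have : (0:ℂ) = ((0:ℝ):ℂ) := by norm_num
    rw [this]
    exact h3.congr (by intro n; simp [Function.comp])
  have hDa := BCLT.Dasymp μ (by rw [hμ]; simpa using hmean) (by rw [hμ]; exact hvar)
  have hsq : ∀ N : ℕ, ((Real.sqrt N : ℂ)) ^ 2 = (N : ℂ) := by
    intro N
    rw [← Complex.ofReal_pow, Real.sq_sqrt (Nat.cast_nonneg N)]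
    norm_num
  intro m
  rcases Nat.eq_zero_or_pos m with hm0 | hmpos
  · subst hm0
    constructor
    · intro h; exact absurd h (by simp)
    · intro _
      have : ∀ N : ℕ, φ ((((Real.sqrt N : ℂ))⁻¹ • ∑ i ∈ Finset.Icc 1 N, a i) ^ 0) = 1 := by
        intro N; rw [pow_zero, hφ1]
      simp only [this]
      exact tendsto_const_nhds
  obtain ⟨mm, rfl⟩ : ∃ mm, m = mm + 1 := ⟨m - 1, by omega⟩
  constructor
  · -- odd case : m = mm+1 odd, mm even, mm = 2t
    intro hodd
    have hmm : mm % 2 = 0 := by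
      have := Nat.odd_iff.mp hodd; omega
    set t := mm / 2 with ht
    have hmm2 : mm = 2 * t := by omega
    obtain ⟨-, γ, hγ⟩ := (hDa mm).1 (by rw [hmm2]; exact even_two_mul t)
    have key : Tendsto (fun N : ℕ =>
        ((Real.sqrt N : ℂ))⁻¹ * (BCLT.Drec μ mm 1 N / (N : ℂ) ^ (mm / 2) * N))
        atTop (nhds (0 * γ)) := hsqrt0.mul hγ
    rw [zero_mul] at key
    apply key.congr'
    filter_upwards [eventually_ge_atTop 1] with N hN
    have hN0 : (N : ℂ) ≠ 0 := Nat.cast_ne_zero.mpr (by omega)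
    have hs0 : ((Real.sqrt N : ℂ)) ≠ 0 := by
      intro h
      rw [← hsq N, h] at hN0
      simp at hN0
    rw [hsmul, hS mm N]
    have hpow : ((Real.sqrt N : ℂ))⁻¹ ^ (mm + 1) =
        (((N : ℂ) ^ t)⁻¹ * ((Real.sqrt N : ℂ))⁻¹) := by
      rw [inv_pow, hmm2, pow_succ, pow_mul, hsq N, mul_inv]
    rw [hpow, ← ht]
    field_simp
  · -- even case : m = mm+1 even, mm odd
    intro heven
    have hmm : mm % 2 = 1 := by
      have := Nat.even_iff.mp heven; omega
    obtain ⟨c, hc, hc1⟩ := (hDa mm).2 (Nat.odd_iff.mpr hmm) 1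
    rw [hc1 rfl] at hc
    set j := mm / 2 with hj
    have hmm2 : mm = 2 * j + 1 := by omega
    apply hc.congr'
    filter_upwards [eventually_ge_atTop 1] with N hN
    have hN0 : (N : ℂ) ≠ 0 := Nat.cast_ne_zero.mpr (by omega)
    rw [hsmul, hS mm N]
    have hpow : ((Real.sqrt N : ℂ))⁻¹ ^ (mm + 1) = ((N : ℂ) ^ (j + 1))⁻¹ := by
      rw [inv_pow, hmm2]
      have : 2 * j + 1 + 1 = 2 * (j + 1) := by ring
      rw [this, pow_mul, hsq N]
    rw [hpow, pow_succ]
    field_simp
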